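/- Let d, N₊, N₋ be positive integers, B ≥ 0, and for each i ∈ {1,…,N₊}, j ∈ {1,…,N₋} let s_{ij} : ℝ^d → ℝ be B-Lipschitz continuous. Let 1 ≤ l ≤ N₋−1 be an integer and let v* ∈ ℝ^d. For each i let Λ*_i ⊆ ℝ denote the set of minimizers of λ_i ↦ lλ_i + Σ_{j=1}^{N₋} [s_{ij}(v*) − λ_i]₊ (a nonempty closed interval), and let Λ* = Π_{i=1}^{N₊} Λ*_i ⊆ ℝ^{N₊}. Then for every v ∈ ℝ^d and λ = (λ₁,…,λ_{N₊}) ∈ ℝ^{N₊}: N₊N₋B‖v − v*‖ + g^l(v, λ) − min_{λ′∈ℝ^{N₊}} g^l(v*, λ′) ≥ Σ_{i=1}^{N₊} dist(λ_i, Λ*_i) ≥ dist(λ, Λ*), where dist(λ, Λ*) is the Euclidean distance in ℝ^{N₊} from λ to the set Λ*. -/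

import Mathlib

open Finset

/-- Bound to the right of a base point: the slope is at least `l - #{j : μ < w j}`. -/
private lemma boundA {n : ℕ} (w : Fin n → ℝ) (l : ℕ) {μ t : ℝ} (h : μ ≤ t) :
    ((l : ℝ) - ((Finset.univ.filter fun j => μ < w j).card : ℝ)) * (t - μ)
      ≤ ((l : ℝ) * t + ∑ j, max (w j - t) 0) - ((l : ℝ) * μ + ∑ j, max (w j - μ) 0) := by
  have hpt : ∀ j : Fin n, (if μ < w j then (μ - t) else 0)
      ≤ max (w j - t) 0 - max (w j - μ) 0 := by
    intro j
    by_cases hj : μ < w j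
    · simp only [hj, if_pos]
      have h1 : max (w j - μ) 0 = w j - μ := max_eq_left (by linarith)
      have h2 : w j - t ≤ max (w j - t) 0 := le_max_left _ _
      linarith
    · push_neg at hj
      rw [if_neg (by exact not_lt.mpr hj)]
      have h1 : max (w j - μ) 0 = 0 := max_eq_right (by linarith)
      have h2 : max (w j - t) 0 = 0 := max_eq_right (by linarith)
      simp [h1, h2]
  have hsum := Finset.sum_le_sum (fun j (_ : j ∈ Finset.univ) => hpt j)
  rw [Finset.sum_ite, Finset.sum_const, Finset.sum_const_zero, add_zero,
    Finset.sum_sub_distrib] at hsum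
  rw [nsmul_eq_mul] at hsum
  nlinarith [hsum]

/-- Bound to the left of a base point: the slope is at most `l - #{j : μ ≤ w j}`. -/
private lemma boundB {n : ℕ} (w : Fin n → ℝ) (l : ℕ) {μ t : ℝ} (h : t ≤ μ) :
    (((Finset.univ.filter fun j => μ ≤ w j).card : ℝ) - (l : ℝ)) * (μ - t)
      ≤ ((l : ℝ) * t + ∑ j, max (w j - t) 0) - ((l : ℝ) * μ + ∑ j, max (w j - μ) 0) := by
  have hpt : ∀ j : Fin n, (if μ ≤ w j then (μ - t) else 0)
      ≤ max (w j - t) 0 - max (w j - μ) 0 := by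
    intro j
    by_cases hj : μ ≤ w j
    · simp only [hj, if_pos]
      have h1 : max (w j - μ) 0 = w j - μ := max_eq_left (by linarith)
      have h2 : max (w j - t) 0 = w j - t := max_eq_left (by linarith)
      linarith
    · rw [if_neg hj]
      have h1 : max (w j - μ) 0 ≤ max (w j - t) 0 :=
        max_le_max (by linarith) le_rfl
      linarith
  have hsum := Finset.sum_le_sum (fun j (_ : j ∈ Finset.univ) => hpt j)
  rw [Finset.sum_ite, Finset.sum_const, Finset.sum_const_zero, add_zero,
    Finset.sum_sub_distrib] at hsum
  rw [nsmul_eq_mul] at hsum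
  nlinarith [hsum]

/-- Key one-dimensional lemma: the function `t ↦ l·t + ∑ⱼ [wⱼ − t]₊` attains its
minimum at some `μ`, and the distance of any `t` to the minimizer set is bounded
by the excess `f t − f μ`. -/
private lemma key (n l : ℕ) (hl1 : 1 ≤ l) (hl2 : l + 1 ≤ n) (w : Fin n → ℝ) :
    ∃ μ : ℝ,
      (∀ t : ℝ, (l : ℝ) * μ + ∑ j, max (w j - μ) 0 ≤ (l : ℝ) * t + ∑ j, max (w j - t) 0) ∧
      (∀ t : ℝ, Metric.infDist t {x : ℝ | ∀ u : ℝ,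
            (l : ℝ) * x + ∑ j, max (w j - x) 0 ≤ (l : ℝ) * u + ∑ j, max (w j - u) 0}
          ≤ ((l : ℝ) * t + ∑ j, max (w j - t) 0) - ((l : ℝ) * μ + ∑ j, max (w j - μ) 0)) := by
  classical
  set f : ℝ → ℝ := fun t => (l : ℝ) * t + ∑ j, max (w j - t) 0 with hf
  set Λ : Set ℝ := {x : ℝ | ∀ u : ℝ, f x ≤ f u} with hΛdef
  set σ := Tuple.sort w with hσ
  have hmono : Monotone (w ∘ σ) := Tuple.monotone_sort w
  have hk1 : n - l < n := by omega
  have hk0 : n - l - 1 < n := by omega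
  set k1 : Fin n := ⟨n - l, hk1⟩ with hk1def
  set k0 : Fin n := ⟨n - l - 1, hk0⟩ with hk0def
  set μ : ℝ := w (σ k1) with hμdef
  set μ' : ℝ := w (σ k0) with hμ'def
  have hk01 : k0 ≤ k1 := by
    rw [Fin.mk_le_mk]; omega
  have hμ'μ : μ' ≤ μ := hmono hk01
  -- counting lemmas
  have count_gt : ∀ k : Fin n,
      (Finset.univ.filter fun j => w (σ k) < w j).card ≤ n - 1 - (k : ℕ) := by
    intro k
    have hle : (Finset.univ.filter fun j => w (σ k) < w j).card ≤ (Finset.Ioi k).card := by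
      apply Finset.card_le_card_of_injOn (fun j => σ.symm j)
      · intro j hj
        simp only [Finset.coe_filter, Finset.mem_coe, Finset.mem_filter, Finset.mem_univ, true_and, Set.mem_setOf_eq] at hj
        simp only [Finset.coe_Ioi, Finset.mem_coe, Finset.mem_Ioi, Set.mem_Ioi]
        by_contra hc
        push_neg at hc
        have h2 : w (σ (σ.symm j)) ≤ w (σ k) := hmono hc
        rw [Equiv.apply_symm_apply] at h2
        exact absurd hj (not_lt.mpr h2)
      · intro a _ b _ hab
        exact σ.symm.injective hab
    rwa [Fin.card_Ioi] at hle
  have count_ge : ∀ k : Fin n,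
      n - (k : ℕ) ≤ (Finset.univ.filter fun j => w (σ k) ≤ w j).card := by
    intro k
    have hle : (Finset.Ici k).card ≤ (Finset.univ.filter fun j => w (σ k) ≤ w j).card := by
      apply Finset.card_le_card_of_injOn (fun j => σ j)
      · intro a ha
        simp only [Finset.coe_Ici, Finset.mem_coe, Finset.mem_Ici, Set.mem_Ici] at ha
        simp only [Finset.coe_filter, Finset.mem_coe, Finset.mem_filter, Finset.mem_univ, true_and, Set.mem_setOf_eq]
        exact hmono ha
      · intro a _ b _ hab
        exact σ.injective hab
    rwa [Fin.card_Ici] at hle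
  have c1 : ((Finset.univ.filter fun j => μ < w j).card : ℝ) ≤ (l : ℝ) - 1 := by
    have h0 : (Finset.univ.filter fun j => μ < w j).card ≤ n - 1 - (n - l) :=
      count_gt k1
    have h' : (Finset.univ.filter fun j => μ < w j).card + 1 ≤ l := by omega
    have : ((Finset.univ.filter fun j => μ < w j).card + 1 : ℝ) ≤ (l : ℝ) := by
      exact_mod_cast h'
    linarith
  have c2 : (l : ℝ) ≤ ((Finset.univ.filter fun j => μ ≤ w j).card : ℝ) := by
    have h0 : n - (n - l) ≤ (Finset.univ.filter fun j => μ ≤ w j).card :=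
      count_ge k1
    have h' : l ≤ (Finset.univ.filter fun j => μ ≤ w j).card := by omega
    exact_mod_cast h'
  have c3 : ((Finset.univ.filter fun j => μ' < w j).card : ℝ) ≤ (l : ℝ) := by
    have h0 : (Finset.univ.filter fun j => μ' < w j).card ≤ n - 1 - (n - l - 1) :=
      count_gt k0
    have h' : (Finset.univ.filter fun j => μ' < w j).card ≤ l := by omega
    exact_mod_cast h'
  have c4 : (l : ℝ) + 1 ≤ ((Finset.univ.filter fun j => μ' ≤ w j).card : ℝ) := by
    have h0 : n - (n - l - 1) ≤ (Finset.univ.filter fun j => μ' ≤ w j).card :=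
      count_ge k0
    have h' : l + 1 ≤ (Finset.univ.filter fun j => μ' ≤ w j).card := by omega
    exact_mod_cast h'
  -- μ is a minimizer
  have hμΛ : ∀ t : ℝ, f μ ≤ f t := by
    intro t
    simp only [hf]
    rcases le_total μ t with h | h
    · have hA := boundA w l h
      have hprod : 0 ≤ ((l : ℝ) - ((Finset.univ.filter fun j => μ < w j).card : ℝ)) * (t - μ) :=
        mul_nonneg (by linarith) (by linarith)
      linarith
    · have hB := boundB w l h
      have hprod : 0 ≤ (((Finset.univ.filter fun j => μ ≤ w j).card : ℝ) - (l : ℝ)) * (μ - t) :=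
        mul_nonneg (by linarith) (by linarith)
      linarith
  -- μ' is a minimizer
  have hμ'Λ : ∀ t : ℝ, f μ' ≤ f t := by
    intro t
    simp only [hf]
    rcases le_total μ' t with h | h
    · have hA := boundA w l h
      have hprod : 0 ≤ ((l : ℝ) - ((Finset.univ.filter fun j => μ' < w j).card : ℝ)) * (t - μ') :=
        mul_nonneg (by linarith) (by linarith)
      linarith
    · have hB := boundB w l h
      have hprod : 0 ≤ (((Finset.univ.filter fun j => μ' ≤ w j).card : ℝ) - (l : ℝ)) * (μ' - t) :=
        mul_nonneg (by linarith) (by linarith)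
      linarith
  have hEq : f μ' = f μ := le_antisymm (hμ'Λ μ) (hμΛ μ')
  refine ⟨μ, hμΛ, ?_⟩
  intro t
  show Metric.infDist t Λ ≤ f t - f μ
  have hμmem : μ ∈ Λ := hμΛ
  have hμ'mem : μ' ∈ Λ := hμ'Λ
  by_cases h1 : t ≤ μ'
  · have hd : Metric.infDist t Λ ≤ μ' - t := by
      have := Metric.infDist_le_dist_of_mem (x := t) hμ'mem
      rwa [Real.dist_eq, abs_of_nonpos (by linarith), neg_sub] at this
    have hB := boundB w l h1
    have hfe : μ' - t ≤ f t - f μ' := by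
      simp only [hf]
      have hone : μ' - t ≤ (((Finset.univ.filter fun j => μ' ≤ w j).card : ℝ) - (l : ℝ)) * (μ' - t) :=
        le_mul_of_one_le_left (by linarith) (by linarith)
      linarith
    calc Metric.infDist t Λ ≤ μ' - t := hd
      _ ≤ f t - f μ' := hfe
      _ = f t - f μ := by rw [hEq]
  · by_cases h2 : μ ≤ t
    · have hd : Metric.infDist t Λ ≤ t - μ := by
        have := Metric.infDist_le_dist_of_mem (x := t) hμmem
        rwa [Real.dist_eq, abs_of_nonneg (by linarith)] at this
      have hA := boundA w l h2
      have hfe : t - μ ≤ f t - f μ := by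
        simp only [hf]
        have hone : t - μ ≤ ((l : ℝ) - ((Finset.univ.filter fun j => μ < w j).card : ℝ)) * (t - μ) :=
          le_mul_of_one_le_left (by linarith) (by linarith)
        linarith
      linarith
    · push_neg at h1 h2
      -- t is itself a minimizer
      have htΛ : t ∈ Λ := by
        rw [hΛdef]
        simp only [Set.mem_setOf_eq, hf]
        intro u
        rcases le_total t u with h | h
        · have hA := boundA w l h
          have hsub : ((Finset.univ.filter fun j => t < w j).card : ℝ)
              ≤ ((Finset.univ.filter fun j => μ' < w j).card : ℝ) := by
            have : (Finset.univ.filter fun j => t < w j)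
                ⊆ (Finset.univ.filter fun j => μ' < w j) := by
              intro j hj
              simp only [Finset.mem_filter, Finset.mem_univ, true_and] at hj ⊢
              linarith
            exact_mod_cast Finset.card_le_card this
          have hprod : 0 ≤ ((l : ℝ) - ((Finset.univ.filter fun j => t < w j).card : ℝ)) * (u - t) :=
            mul_nonneg (by linarith) (by linarith)
          linarith
        · have hB := boundB w l h
          have hsub : ((Finset.univ.filter fun j => μ ≤ w j).card : ℝ)
              ≤ ((Finset.univ.filter fun j => t ≤ w j).card : ℝ) := by
            have : (Finset.univ.filter fun j => μ ≤ w j)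
                ⊆ (Finset.univ.filter fun j => t ≤ w j) := by
              intro j hj
              simp only [Finset.mem_filter, Finset.mem_univ, true_and] at hj ⊢
              linarith
            exact_mod_cast Finset.card_le_card this
          have hprod : 0 ≤ (((Finset.univ.filter fun j => t ≤ w j).card : ℝ) - (l : ℝ)) * (t - u) :=
            mul_nonneg (by linarith) (by linarith)
          linarith
      have hd : Metric.infDist t Λ ≤ 0 := by
        have := Metric.infDist_le_dist_of_mem (x := t) htΛ
        simpa using this
      have := hμΛ t
      linarith

/-- Error-bound lemma for `g^l` (Lemma 5 of the paper).  Each `s i j : ℝ^d → ℝ` is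
`B`-Lipschitz, `1 ≤ l ≤ N₋−1`, `v* ∈ ℝ^d`, `Λ*_i` is the set of minimizers of
`λᵢ ↦ lλᵢ + ∑ⱼ [s_{ij}(v*) − λᵢ]₊`, and `Λ* = Π_i Λ*_i`.  Then for every `v` and `λ`:
`N₊N₋B‖v − v*‖ + g^l(v, λ) − min_{λ′} g^l(v*, λ′) ≥ ∑ᵢ dist(λᵢ, Λ*_i) ≥ dist(λ, Λ*)`,
the last distance being the Euclidean distance in `ℝ^{N₊}`. -/
theorem stmt16 (d Np Nm : ℕ) (hd : 0 < d) (hNp : 0 < Np) (hNm : 0 < Nm)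
    (B : ℝ) (hB : 0 ≤ B)
    (s : Fin Np → Fin Nm → EuclideanSpace ℝ (Fin d) → ℝ)
    (hlip : ∀ (i : Fin Np) (j : Fin Nm) (u v : EuclideanSpace ℝ (Fin d)),
      |s i j u - s i j v| ≤ B * ‖u - v‖)
    (l : ℕ) (hl1 : 1 ≤ l) (hl2 : l + 1 ≤ Nm)
    (vstar : EuclideanSpace ℝ (Fin d))
    (Λ : Fin Np → Set ℝ)
    (hΛ : ∀ i, Λ i = {lami : ℝ | ∀ t : ℝ,
      (l : ℝ) * lami + ∑ j, max (s i j vstar - lami) 0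
        ≤ (l : ℝ) * t + ∑ j, max (s i j vstar - t) 0})
    (v : EuclideanSpace ℝ (Fin d)) (lam : EuclideanSpace ℝ (Fin Np)) :
    ((Np : ℝ) * Nm * B * ‖v - vstar‖
        + ((l : ℝ) * ∑ i, lam i + ∑ i, ∑ j, max (s i j v - lam i) 0)
        - sInf (Set.range fun lam' : Fin Np → ℝ =>
            (l : ℝ) * ∑ i, lam' i + ∑ i, ∑ j, max (s i j vstar - lam' i) 0)
      ≥ ∑ i, Metric.infDist (lam i) (Λ i)) ∧
    (∑ i, Metric.infDist (lam i) (Λ i)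
      ≥ Metric.infDist lam {lam' : EuclideanSpace ℝ (Fin Np) | ∀ i, lam' i ∈ Λ i}) := by
  classical
  -- per-coordinate objective at vstar
  set fi : Fin Np → ℝ → ℝ :=
    fun i t => (l : ℝ) * t + ∑ j, max (s i j vstar - t) 0 with hfi
  have hkey : ∀ i : Fin Np, ∃ μ : ℝ,
      (∀ t : ℝ, fi i μ ≤ fi i t) ∧
      (∀ t : ℝ, Metric.infDist t (Λ i) ≤ fi i t - fi i μ) := by
    intro i
    obtain ⟨μ, hmin, hdist⟩ := key Nm l hl1 hl2 (fun j => s i j vstar)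
    refine ⟨μ, hmin, fun t => ?_⟩
    rw [hΛ i]
    exact hdist t
  choose μ hmin hdist using hkey
  -- lower bound for the range and value of sInf
  set F : (Fin Np → ℝ) → ℝ := fun lam' =>
    (l : ℝ) * ∑ i, lam' i + ∑ i, ∑ j, max (s i j vstar - lam' i) 0 with hF
  have hFsum : ∀ lam' : Fin Np → ℝ, F lam' = ∑ i, fi i (lam' i) := by
    intro lam'
    rw [hF]
    simp only [hfi]
    rw [Finset.sum_add_distrib, Finset.mul_sum]
  have hlb : ∀ y ∈ Set.range F, (∑ i, fi i (μ i)) ≤ y := by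
    rintro y ⟨lam', rfl⟩
    rw [hFsum lam']
    exact Finset.sum_le_sum fun i _ => hmin i (lam' i)
  have hsInf : sInf (Set.range F) ≤ ∑ i, fi i (μ i) := by
    have hmem : F (fun i => μ i) ∈ Set.range F := ⟨_, rfl⟩
    calc sInf (Set.range F) ≤ F (fun i => μ i) := csInf_le ⟨_, hlb⟩ hmem
      _ = ∑ i, fi i (μ i) := hFsum _
  -- Lipschitz comparison between v and vstar
  have hLip : ∀ (i : Fin Np) (j : Fin Nm),
      max (s i j vstar - lam i) 0 - B * ‖v - vstar‖ ≤ max (s i j v - lam i) 0 := by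
    intro i j
    have h1 := abs_max_sub_max_le_abs (s i j vstar - lam i) (s i j v - lam i) 0
    have heq : (s i j vstar - lam i) - (s i j v - lam i) = s i j vstar - s i j v := by ring
    rw [heq] at h1
    have h2 := hlip i j vstar v
    have h3 : ‖vstar - v‖ = ‖v - vstar‖ := norm_sub_rev _ _
    rw [h3] at h2
    have h4 := (abs_le.mp h1).2
    linarith
  have hsumLip : ∑ i, ∑ j, max (s i j vstar - lam i) 0 - (Np : ℝ) * Nm * B * ‖v - vstar‖
      ≤ ∑ i, ∑ j, max (s i j v - lam i) 0 := by
    have hconst : ∑ _i : Fin Np, ∑ _j : Fin Nm, (B * ‖v - vstar‖)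
        = (Np : ℝ) * Nm * B * ‖v - vstar‖ := by
      simp [Finset.sum_const, Finset.card_univ]
      ring
    calc ∑ i, ∑ j, max (s i j vstar - lam i) 0 - (Np : ℝ) * Nm * B * ‖v - vstar‖
          = ∑ i, (∑ j, max (s i j vstar - lam i) 0 - ∑ _j : Fin Nm, (B * ‖v - vstar‖)) := by
            rw [Finset.sum_sub_distrib, ← hconst]
        _ ≤ ∑ i, ∑ j, max (s i j v - lam i) 0 := by
            refine Finset.sum_le_sum fun i _ => ?_
            rw [← Finset.sum_sub_distrib]
            exact Finset.sum_le_sum fun j _ => hLip i j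
  have hdistsum : ∑ i, Metric.infDist (lam i) (Λ i)
      ≤ ∑ i, fi i (lam i) - ∑ i, fi i (μ i) := by
    rw [← Finset.sum_sub_distrib]
    exact Finset.sum_le_sum fun i _ => hdist i (lam i)
  have hexp : ∑ i, fi i (lam i)
      = (l : ℝ) * ∑ i, lam i + ∑ i, ∑ j, max (s i j vstar - lam i) 0 := by
    simp only [hfi]
    rw [Finset.sum_add_distrib, Finset.mul_sum]
  constructor
  · rw [ge_iff_le]
    have h1 : ∑ i, Metric.infDist (lam i) (Λ i)
        ≤ ∑ i, fi i (lam i) - sInf (Set.range F) := by linarith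
    rw [hexp] at h1
    linarith
  · rw [ge_iff_le]
    set S : Set (EuclideanSpace ℝ (Fin Np)) := {lam' | ∀ i, lam' i ∈ Λ i} with hS
    have hμS : (WithLp.toLp 2 μ : EuclideanSpace ℝ (Fin Np)) ∈ S := by
      intro i
      rw [hΛ i]
      exact hmin i
    refine le_of_forall_pos_le_add fun ε hε => ?_
    have hNp' : (0 : ℝ) < Np := by exact_mod_cast hNp
    have hchoose : ∀ i : Fin Np, ∃ y ∈ Λ i,
        dist (lam i) y < Metric.infDist (lam i) (Λ i) + ε / Np := by
      intro i
      have hne : (Λ i).Nonempty := ⟨μ i, by rw [hΛ i]; exact hmin i⟩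
      refine (Metric.infDist_lt_iff hne).mp ?_
      have : 0 < ε / Np := by positivity
      linarith
    choose y hyΛ hylt using hchoose
    have hyS : (WithLp.toLp 2 y : EuclideanSpace ℝ (Fin Np)) ∈ S := fun i => hyΛ i
    have hd1 : Metric.infDist lam S ≤ dist lam (WithLp.toLp 2 y : EuclideanSpace ℝ (Fin Np)) :=
      Metric.infDist_le_dist_of_mem hyS
    have hd2 : dist lam (WithLp.toLp 2 y : EuclideanSpace ℝ (Fin Np)) ≤ ∑ i, dist (lam i) (y i) := by
      rw [EuclideanSpace.dist_eq]
      have hnn : ∀ i ∈ (Finset.univ : Finset (Fin Np)), (0 : ℝ) ≤ dist (lam i) (y i) :=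
        fun i _ => dist_nonneg
      have hsq := Finset.sum_sq_le_sq_sum_of_nonneg hnn
      calc Real.sqrt (∑ i, dist (lam i) (y i) ^ 2)
          ≤ Real.sqrt ((∑ i, dist (lam i) (y i)) ^ 2) := Real.sqrt_le_sqrt hsq
        _ = ∑ i, dist (lam i) (y i) := by
            rw [Real.sqrt_sq (Finset.sum_nonneg hnn)]
    have hd3 : ∑ i, dist (lam i) (y i)
        ≤ ∑ i, (Metric.infDist (lam i) (Λ i) + ε / Np) :=
      Finset.sum_le_sum fun i _ => (hylt i).le
    have hd4 : ∑ i, (Metric.infDist (lam i) (Λ i) + ε / Np)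
        = ∑ i, Metric.infDist (lam i) (Λ i) + ε := by
      rw [Finset.sum_add_distrib, Finset.sum_const, Finset.card_univ]
      simp only [Fintype.card_fin, nsmul_eq_mul]
      field_simp
    linarith
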